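/- Let H be a Hilbert space, T a bounded operator on H, and let ν(T) := inf{‖Tv‖ : ‖v‖ = 1} be the lower norm. For finite subsets of indices, the truncated lower norm commutes with ultralimits: if T is a bounded operator on ℓ²(X), ω an ultrafilter on I, F = [F_i] a finite subset of X^ω with #F_i = #F for ω-almost all i, and T^ω the induced operator, then ν(T^ω P_F) = lim_{i→ω} ν(T P_{F_i}). -/

import Mathlib

noncomputable section
open scoped ENNReal
open Filter

/-- The Hilbert space ℓ²(X). -/
abbrev L2 (X : Type*) := lp (fun _ : X => ℂ) 2

/-- The Dirac function δ_x ∈ ℓ²(X). -/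
noncomputable def dirac {X : Type*} (x : X) : L2 X := by
  classical exact lp.single 2 x 1

/-- The lower norm of T truncated to the subspace ℓ²(Y) ⊆ ℓ²(X):
ν(T P_Y) = inf{‖Tf‖ : ‖f‖ = 1, supp f ⊆ Y}. -/
noncomputable def lowNormOn {X : Type*} (T : L2 X →L[ℂ] L2 X) (Y : Set X) : ℝ :=
  sInf {r : ℝ | ∃ f : L2 X, ‖f‖ = 1 ∧ (∀ x ∉ Y, f x = 0) ∧ r = ‖T f‖}

section AuxLemmas
variable {X : Type*}

lemma norm_dirac (x : X) : ‖(dirac x : L2 X)‖ = 1 := by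
  classical
  simpa [dirac] using lp.norm_single (E := fun _ : X => ℂ) (p := 2) (by norm_num)
    (fun _ : X => (1 : ℂ)) x

lemma dirac_apply_self (x : X) : (dirac x : L2 X) x = 1 := by
  classical simpa [dirac] using lp.single_apply_self (E := fun _ : X => ℂ) 2 x (1 : ℂ)

lemma dirac_apply_ne {x y : X} (h : y ≠ x) : (dirac x : L2 X) y = 0 := by
  classical simpa [dirac] using lp.single_apply_ne (E := fun _ : X => ℂ) 2 x (1 : ℂ) h

lemma orthonormal_dirac {n : ℕ} {e : Fin n → X} (he : Function.Injective e) :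
    Orthonormal ℂ fun k => (dirac (e k) : L2 X) := by
  classical
  rw [orthonormal_iff_ite]
  intro i j
  rw [show (dirac (e i) : L2 X) = lp.single 2 (e i) (1 : ℂ) from rfl, lp.inner_single_left,
    RCLike.inner_apply]
  rcases eq_or_ne i j with rfl | hij
  · simp [dirac_apply_self]
  · simp [dirac_apply_ne (show e i ≠ e j from fun h => hij (he h)), hij]

lemma norm_sum_dirac {n : ℕ} {e : Fin n → X} (he : Function.Injective e) (a : Fin n → ℂ) :
    ‖∑ k, a k • (dirac (e k) : L2 X)‖ = Real.sqrt (∑ k, ‖a k‖ ^ 2) := by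
  have h := (orthonormal_dirac he).inner_sum a a Finset.univ
  have h2 : ‖∑ k, a k • (dirac (e k) : L2 X)‖ ^ 2 = ∑ k, ‖a k‖ ^ 2 := by
    have h3 := norm_sq_eq_re_inner (𝕜 := ℂ) (∑ k, a k • (dirac (e k) : L2 X))
    rw [h3, h]
    simp [RCLike.conj_mul]
    norm_cast
  rw [← h2, Real.sqrt_sq (norm_nonneg _)]

lemma sum_dirac_apply_not_mem {n : ℕ} {e : Fin n → X} {y : X} (hy : y ∉ Set.range e)
    (a : Fin n → ℂ) : (∑ k, a k • (dirac (e k) : L2 X)) y = 0 := by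
  rw [lp.coeFn_sum]
  simp only [Finset.sum_apply, lp.coeFn_smul, Pi.smul_apply, smul_eq_mul]
  exact Finset.sum_eq_zero fun k _ => by
    rw [dirac_apply_ne (show y ≠ e k from fun h => hy ⟨k, h.symm⟩), mul_zero]

lemma sum_dirac_eq {n : ℕ} {e : Fin n → X} (he : Function.Injective e) (f : L2 X)
    (hf : ∀ y ∉ Set.range e, f y = 0) :
    f = ∑ k, f (e k) • (dirac (e k) : L2 X) := by
  classical
  apply lp.ext
  funext y
  by_cases hy : y ∈ Set.range e
  · rw [lp.coeFn_sum]
    simp only [Finset.sum_apply, lp.coeFn_smul, Pi.smul_apply, smul_eq_mul]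
    obtain ⟨k, rfl⟩ := hy
    rw [Finset.sum_eq_single k]
    · simp [dirac_apply_self]
    · intro b _ hb
      rw [dirac_apply_ne (show e k ≠ e b from fun h => hb (he h).symm), mul_zero]
    · simp
  · rw [hf y hy, sum_dirac_apply_not_mem hy]

lemma norm_sum_dirac_le {n : ℕ} (e : Fin n → X) (a : Fin n → ℂ) :
    ‖∑ k, a k • (dirac (e k) : L2 X)‖ ≤ ∑ k, ‖a k‖ := by
  refine (norm_sum_le _ _).trans_eq (Finset.sum_congr rfl fun k _ => ?_)
  rw [norm_smul, norm_dirac, mul_one]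

end AuxLemmas

set_option maxHeartbeats 1000000 in
/-- The finitely truncated lower norm commutes with ultralimits:
for a finite subset F = [F_i] of X^ω of ω-a.e. constant cardinality n, enumerated by
germs x_1, …, x_n, the lower norm of T^ω P_F (computed on vectors ∑ a_k δ_{[x_k]} of
norm one, where ‖T^ω ∑ a_k δ_{[x_k]}‖ is the ω-limit of ‖T ∑ a_k δ_{x_k(i)}‖) is the
ω-limit of the truncated lower norms ν(T P_{F_i}). -/
theorem lowNorm_commutes_with_ultralimit {X I : Type*} (T : L2 X →L[ℂ] L2 X)
    (ω : Ultrafilter I) (F : I → Set X) (hF : ∀ i, (F i).Finite)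
    (n : ℕ) (x : Fin n → I → X)
    (henum : ∀ᶠ i in (ω : Filter I), F i = Set.range fun k => x k i)
    (hinj : ∀ᶠ i in (ω : Filter I), Function.Injective fun k => x k i) :
    Filter.Tendsto (fun i => lowNormOn T (F i)) (ω : Filter I)
      (nhds (sInf {r : ℝ | ∃ a : Fin n → ℂ, (∑ k : Fin n, ‖a k‖ ^ 2) = 1 ∧
        Filter.Tendsto (fun i => ‖T (∑ k : Fin n, a k • dirac (x k i))‖)
          (ω : Filter I) (nhds r)})) := by
  classical
  set S : Set ℝ := {r : ℝ | ∃ a : Fin n → ℂ, (∑ k : Fin n, ‖a k‖ ^ 2) = 1 ∧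
      Filter.Tendsto (fun i => ‖T (∑ k : Fin n, a k • dirac (x k i))‖)
        (ω : Filter I) (nhds r)} with hSdef
  rcases Nat.eq_zero_or_pos n with hn | hn
  · -- n = 0
    subst hn
    have hSempty : S = ∅ := by
      ext r
      simp only [hSdef, Set.mem_setOf_eq, Set.mem_empty_iff_false, iff_false, not_exists]
      rintro a ⟨ha, -⟩
      simp at ha
    rw [hSempty, Real.sInf_empty]
    have hev : ∀ᶠ i in (ω : Filter I), lowNormOn T (F i) = 0 := by
      filter_upwards [henum] with i hi
      have hFi : F i = ∅ := by rw [hi]; exact Set.range_eq_empty _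
      have hset : {r : ℝ | ∃ f : L2 X, ‖f‖ = 1 ∧ (∀ y ∉ F i, f y = 0) ∧ r = ‖T f‖} = ∅ := by
        ext r
        simp only [Set.mem_setOf_eq, Set.mem_empty_iff_false, iff_false, not_exists]
        rintro f ⟨hf1, hf0, -⟩
        have hf : f = 0 := by
          apply lp.ext
          funext y
          exact hf0 y (by rw [hFi]; exact Set.notMem_empty y)
        rw [hf, norm_zero] at hf1
        exact one_ne_zero hf1.symm
      rw [lowNormOn, hset, Real.sInf_empty]
    exact Tendsto.congr' (hev.mono fun i h => h.symm) tendsto_const_nhds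
  · -- n ≥ 1
    set c : ℝ := sInf S with hcdef
    set a₀ : Fin n → ℂ := fun k => if k = ⟨0, hn⟩ then 1 else 0 with ha₀def
    have ha₀sum : (∑ k : Fin n, ‖a₀ k‖ ^ 2) = 1 := by
      rw [ha₀def]
      simp [apply_ite norm, Finset.sum_ite_eq']
    have hlim : ∀ a : Fin n → ℂ, ∃ r : ℝ,
        Filter.Tendsto (fun i => ‖T (∑ k : Fin n, a k • dirac (x k i))‖)
          (ω : Filter I) (nhds r) := by
      intro a
      have hprin : ↑(ω.map fun i => ‖T (∑ k : Fin n, a k • dirac (x k i))‖) ≤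
          Filter.principal (Set.Icc (0:ℝ) (‖T‖ * ∑ k, ‖a k‖)) := by
        rw [Ultrafilter.coe_map, Filter.le_principal_iff, Filter.mem_map]
        refine Filter.univ_mem' fun i => ⟨norm_nonneg _, ?_⟩
        exact (T.le_opNorm _).trans
          (mul_le_mul_of_nonneg_left (norm_sum_dirac_le _ a) (norm_nonneg T))
      obtain ⟨r, -, hr⟩ := (isCompact_Icc (a := (0:ℝ))
          (b := ‖T‖ * ∑ k, ‖a k‖)).ultrafilter_le_nhds
        (ω.map fun i => ‖T (∑ k : Fin n, a k • dirac (x k i))‖) hprin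
      refine ⟨r, ?_⟩
      rwa [Ultrafilter.coe_map] at hr
    have hSne : S.Nonempty := by
      obtain ⟨r, hr⟩ := hlim a₀
      exact ⟨r, a₀, ha₀sum, hr⟩
    have hSbdd : BddBelow S := by
      refine ⟨0, fun r hr => ?_⟩
      obtain ⟨a, -, hr⟩ := hr
      exact ge_of_tendsto' hr fun i => norm_nonneg _
    -- membership lemmas for good indices
    have hmemA : ∀ i, (F i = Set.range fun k => x k i) → (Function.Injective fun k => x k i) →
        ∀ a : Fin n → ℂ, (∑ k : Fin n, ‖a k‖ ^ 2) = 1 →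
        ‖T (∑ k : Fin n, a k • dirac (x k i))‖ ∈
          {r : ℝ | ∃ f : L2 X, ‖f‖ = 1 ∧ (∀ y ∉ F i, f y = 0) ∧ r = ‖T f‖} := by
      intro i hi1 hi2 a ha
      refine ⟨∑ k, a k • dirac (x k i), ?_, ?_, rfl⟩
      · rw [norm_sum_dirac hi2 a, ha, Real.sqrt_one]
      · intro y hy
        rw [hi1] at hy
        exact sum_dirac_apply_not_mem hy a
    have hbddlow : ∀ i, BddBelow
        {r : ℝ | ∃ f : L2 X, ‖f‖ = 1 ∧ (∀ y ∉ F i, f y = 0) ∧ r = ‖T f‖} := by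
      intro i
      refine ⟨0, ?_⟩
      rintro r ⟨f, -, -, rfl⟩
      exact norm_nonneg _
    have hmemB : ∀ i, (F i = Set.range fun k => x k i) → (Function.Injective fun k => x k i) →
        ∀ r ∈ {r : ℝ | ∃ f : L2 X, ‖f‖ = 1 ∧ (∀ y ∉ F i, f y = 0) ∧ r = ‖T f‖},
        ∃ a : Fin n → ℂ, (∑ k : Fin n, ‖a k‖ ^ 2) = 1 ∧
          r = ‖T (∑ k : Fin n, a k • dirac (x k i))‖ := by
      intro i hi1 hi2 r hr
      obtain ⟨f, hf1, hf0, rfl⟩ := hr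
      have hsupp : ∀ y ∉ Set.range fun k => x k i, f y = 0 := by
        intro y hy
        exact hf0 y (by rw [hi1]; exact hy)
      have hdec := sum_dirac_eq hi2 f hsupp
      refine ⟨fun k => f (x k i), ?_, by rw [← hdec]⟩
      have hns := norm_sum_dirac hi2 (fun k => f (x k i))
      rw [← hdec, hf1] at hns
      rwa [eq_comm, Real.sqrt_eq_one] at hns
    rw [Metric.tendsto_nhds]
    intro ε hε
    have hε4 : 0 < ε / 4 := by positivity
    -- upper bound
    obtain ⟨r, hrS, hrlt⟩ := Real.lt_sInf_add_pos hSne (half_pos hε)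
    obtain ⟨a, haone, halim⟩ := hrS
    have hupper : ∀ᶠ i in (ω : Filter I), lowNormOn T (F i) < c + ε := by
      filter_upwards [henum, hinj,
        halim.eventually_lt_const (lt_add_of_pos_right r (half_pos hε))] with i hi1 hi2 hi3
      have hle : lowNormOn T (F i) ≤ ‖T (∑ k : Fin n, a k • dirac (x k i))‖ :=
        csInf_le (hbddlow i) (hmemA i hi1 hi2 a haone)
      have : r < c + ε / 2 := hrlt
      linarith
    -- lower bound
    have hlower : ∀ᶠ i in (ω : Filter I), c - ε < lowNormOn T (F i) := by
      by_contra hcon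
      have hA : ∀ᶠ i in (ω : Filter I), lowNormOn T (F i) ≤ c - ε := by
        rcases Ultrafilter.em ω (fun i => c - ε < lowNormOn T (F i)) with h | h
        · exact absurd h hcon
        · simpa only [not_lt] using h
      have hchoice : ∀ i : I, ∃ a : Fin n → ℂ, (∑ k : Fin n, ‖a k‖ ^ 2) = 1 ∧
          ((F i = Set.range fun k => x k i) → (Function.Injective fun k => x k i) →
            lowNormOn T (F i) ≤ c - ε →
            ‖T (∑ k : Fin n, a k • dirac (x k i))‖ < c - ε + ε / 4) := by
        intro i
        by_cases hgood : (F i = Set.range fun k => x k i) ∧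
            (Function.Injective fun k => x k i) ∧ lowNormOn T (F i) ≤ c - ε
        · obtain ⟨hi1, hi2, hi3⟩ := hgood
          have hne : {r : ℝ | ∃ f : L2 X, ‖f‖ = 1 ∧ (∀ y ∉ F i, f y = 0) ∧ r = ‖T f‖}.Nonempty :=
            ⟨_, hmemA i hi1 hi2 a₀ ha₀sum⟩
          obtain ⟨r', hr'mem, hr'lt⟩ := Real.lt_sInf_add_pos hne hε4
          obtain ⟨b, hb1, hb2⟩ := hmemB i hi1 hi2 r' hr'mem
          refine ⟨b, hb1, fun _ _ _ => ?_⟩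
          rw [← hb2]
          have : r' < lowNormOn T (F i) + ε / 4 := hr'lt
          linarith
        · exact ⟨a₀, ha₀sum, fun h1 h2 h3 => absurd ⟨h1, h2, h3⟩ hgood⟩
      choose aa haa1 haa2 using hchoice
      set b : I → EuclideanSpace ℂ (Fin n) :=
        fun i => (WithLp.equiv 2 (Fin n → ℂ)).symm (aa i) with hbdef
      have hbnorm : ∀ i, ‖b i‖ = 1 := by
        intro i
        rw [EuclideanSpace.norm_eq]
        simp only [hbdef, WithLp.equiv_symm_apply, PiLp.toLp_apply]
        rw [haa1 i, Real.sqrt_one]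
      obtain ⟨binf, hbinfmem, hbinflim⟩ :=
        (isCompact_sphere (0 : EuclideanSpace ℂ (Fin n)) 1).ultrafilter_le_nhds
          (ω.map b) (by
            rw [Ultrafilter.coe_map, Filter.le_principal_iff, Filter.mem_map]
            exact Filter.univ_mem' fun i => by
              simp [mem_sphere_zero_iff_norm, hbnorm i])
      have hbt : Tendsto b (ω : Filter I) (nhds binf) := by
        rwa [Ultrafilter.coe_map] at hbinflim
      set ainf : Fin n → ℂ := fun k => binf k with hainfdef
      have hainf1 : (∑ k : Fin n, ‖ainf k‖ ^ 2) = 1 := by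
        have h1 : ‖binf‖ = 1 := mem_sphere_zero_iff_norm.mp hbinfmem
        rw [EuclideanSpace.norm_eq] at h1
        rwa [Real.sqrt_eq_one] at h1
      obtain ⟨L, hL⟩ := hlim ainf
      have hcL : c ≤ L := csInf_le hSbdd ⟨ainf, hainf1, hL⟩
      set δ : ℝ := ε / (4 * (‖T‖ + 1)) with hδdef
      have hδpos : 0 < δ := by
        rw [hδdef]
        positivity
      have hTδ : ‖T‖ * δ ≤ ε / 4 := by
        have h0 : (0:ℝ) < 4 * (‖T‖ + 1) := by positivity
        rw [hδdef, ← mul_div_assoc, div_le_div_iff₀ h0 (by norm_num : (0:ℝ) < 4)]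
        nlinarith [norm_nonneg T, hε.le]
      have hev : ∀ᶠ i in (ω : Filter I),
          ‖T (∑ k : Fin n, ainf k • dirac (x k i))‖ ≤ c - ε / 2 := by
        filter_upwards [henum, hinj, hA, hbt (Metric.ball_mem_nhds binf hδpos)]
          with i hi1 hi2 hi3 hi4
        have hkey := haa2 i hi1 hi2 hi3
        have hdiff : ‖T (∑ k : Fin n, ainf k • dirac (x k i)) -
            T (∑ k : Fin n, aa i k • dirac (x k i))‖ ≤ ‖T‖ * δ := by
          rw [← map_sub]
          refine (T.le_opNorm _).trans ?_
          have hsub : (∑ k : Fin n, ainf k • dirac (x k i)) -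
              (∑ k : Fin n, aa i k • dirac (x k i)) =
              ∑ k : Fin n, (ainf k - aa i k) • dirac (x k i) := by
            rw [← Finset.sum_sub_distrib]
            exact Finset.sum_congr rfl fun k _ => (sub_smul _ _ _).symm
          rw [hsub, norm_sum_dirac hi2]
          have hdist : Real.sqrt (∑ k, ‖ainf k - aa i k‖ ^ 2) = dist (b i) binf := by
            rw [dist_eq_norm, EuclideanSpace.norm_eq]
            congr 1
            refine Finset.sum_congr rfl fun k _ => ?_
            congr 1
            simp only [hbdef, hainfdef, PiLp.sub_apply, WithLp.equiv_symm_apply, PiLp.toLp_apply]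
            rw [norm_sub_rev]
          rw [hdist]
          have : dist (b i) binf < δ := Metric.mem_ball.mp hi4
          exact mul_le_mul_of_nonneg_left this.le (norm_nonneg T)
        have htri : ‖T (∑ k : Fin n, ainf k • dirac (x k i))‖ ≤
            ‖T (∑ k : Fin n, aa i k • dirac (x k i))‖ +
            ‖T (∑ k : Fin n, ainf k • dirac (x k i)) -
              T (∑ k : Fin n, aa i k • dirac (x k i))‖ := by
          exact norm_le_insert' _ _
        linarith
      have hLle : L ≤ c - ε / 2 := le_of_tendsto hL hev
      linarith
    filter_upwards [hupper, hlower] with i h1 h2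
    rw [Real.dist_eq, abs_sub_lt_iff]
    constructor <;> linarith
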